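/- arXiv:2107.05296 — 2 statements merged into one kernel-verified Lean document; each statement's English description precedes it below -/
import Mathlib

section
/- Let n ≥ 1, let p be a prime, let T = (V,E) be the complete binary tree of height n with leaf set L, and let σ : L → Z/pZ. In the PSP instance P(n,p,σ,t), for every vertex v ∈ V and every a ∈ Z/pZ, the pair (v,a) lies in the upward closure of S if and only if a = Σ_{l ∈ L, l in the subtree rooted at v} σ(l), the sum in Z/pZ of the values σ(l) over all leaves l below v. In particular, for each vertex v there is exactly one a ∈ Z/pZ with (v,a) in the upward closure of S. -/
/-!
Vertices of the complete rooted binary tree of height `n` are modelled as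
binary strings (lists of booleans) of length at most `n`: the root is the empty
list, and the two children of a vertex `x` (when `x.length < n`) are
`x ++ [true]` and `x ++ [false]`.  Leaves are the strings of length exactly `n`
and the height of a vertex is its distance to the leaves below it.
-/

/-- The ambient type of tree vertices: binary strings. -/
abbrev V : Type := List Bool

/-- The vertex set of the complete binary tree of height `n`. -/
def treeSet (n : ℕ) : Set V := {l : V | l.length ≤ n}

/-- The height of a vertex: its distance to the leaves below it. -/
def hgt (n : ℕ) (v : V) : ℕ := n - v.length

/-- A set `X` is closed if, whenever two elements of a related triple
(a parent together with its two children) belong to `X`, so does the third. -/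
def TripleClosed (n : ℕ) (X : Set V) : Prop :=
  ∀ x : V, x.length < n →
    ((x ∈ X → x ++ [true] ∈ X → x ++ [false] ∈ X) ∧
     (x ∈ X → x ++ [false] ∈ X → x ++ [true] ∈ X) ∧
     (x ++ [true] ∈ X → x ++ [false] ∈ X → x ∈ X))

/-- The closure of `X`: the smallest closed subset of the tree containing `X`. -/
def cl (n : ℕ) (X : Set V) : Set V :=
  ⋂₀ {Y : Set V | X ⊆ Y ∧ Y ⊆ treeSet n ∧ TripleClosed n Y}

/-- `min-h(X)`: the minimum height of an element of `X`. -/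
noncomputable def minh (n : ℕ) (X : Set V) : ℕ := sInf (hgt n '' X)

/-- `z` lies on the unique undirected path between `x` and `y`:
`z` is an ancestor of `x` or of `y`, and the longest common prefix of
`x` and `y` is an ancestor of `z`. -/
def OnPath (x y z : V) : Prop :=
  (z <+: x ∨ z <+: y) ∧ ∀ w : V, w <+: x → w <+: y → w <+: z

/-- `X` is connected: it contains the undirected path between any two of its elements. -/
def Conn (X : Set V) : Prop :=
  ∀ x ∈ X, ∀ y ∈ X, ∀ z : V, OnPath x y z → z ∈ X

/-- `F` encloses `v`: every path from `v` down to a leaf contains an element of `F`. -/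
def Encloses (n : ℕ) (F : Set V) (v : V) : Prop :=
  ∀ l : V, l.length = n → v <+: l → ∃ z ∈ F, v <+: z ∧ z <+: l

/-- `F` minimally encloses `v`. -/
def MinEncloses (n : ℕ) (F : Set V) (v : V) : Prop :=
  Encloses n F v ∧ ∀ F' : Set V, F' ⊂ F → ¬ Encloses n F' v

/-- `r` is the head of `X`: an element of `X` of maximum height. -/
def IsHead (n : ℕ) (X : Set V) (r : V) : Prop :=
  r ∈ X ∧ ∀ y ∈ X, hgt n y ≤ hgt n r

/-- `Fr` is the frontier of the closed connected set `S` with head `x`: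
`Fr ⊆ S` minimally encloses `x` and `S` consists exactly of the vertices lying
on the directed path from `x` to some element of `Fr`. -/
def IsFrontier (n : ℕ) (S Fr : Set V) (x : V) : Prop :=
  Fr ⊆ S ∧ MinEncloses n Fr x ∧ S = {z : V | ∃ f ∈ Fr, x <+: z ∧ z <+: f}

/-- The upward closure of a set `X` with respect to a ternary relation `R`:
the smallest superset `Y` of `X` such that whenever `a ∈ Y`, `b ∈ Y` and
`(a,b,c) ∈ R`, also `c ∈ Y`. -/
inductive UpClosure {U : Type*} (R : U → U → U → Prop) (X : Set U) : U → Prop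
  | base : ∀ {x : U}, x ∈ X → UpClosure R X x
  | step : ∀ {a b c : U}, UpClosure R X a → UpClosure R X b → R a b c →
      UpClosure R X c

/-- The ternary relation of the PSP instance `P(n,p,σ,t)`:
`((u,a),(v,b),(w,c)) ∈ R` iff `a + b = c` in `Z/pZ` and `u` and `v` are the
two children of `w` in the complete binary tree of height `n`. -/
def pspR (n p : ℕ) : (V × ZMod p) → (V × ZMod p) → (V × ZMod p) → Prop :=
  fun x y z =>
    x.2 + y.2 = z.2 ∧ z.1.length < n ∧
    ((x.1 = z.1 ++ [true] ∧ y.1 = z.1 ++ [false]) ∨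
     (x.1 = z.1 ++ [false] ∧ y.1 = z.1 ++ [true]))

/-- The source set `S = {(l, σ(l)) : l a leaf}` of the PSP instance. -/
def pspS (n p : ℕ) (σ : V → ZMod p) : Set (V × ZMod p) :=
  {x : V × ZMod p | x.1.length = n ∧ x.2 = σ x.1}

noncomputable def leafSum (n p : ℕ) (σ : V → ZMod p) (v : V) : ZMod p :=
  ∑ᶠ l ∈ {l : V | l.length = n ∧ v <+: l}, σ l

lemma leafSum_leaf (n p : ℕ) (σ : V → ZMod p) (v : V) (hv : v.length = n) :
    leafSum n p σ v = σ v := by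
  have : {l : V | l.length = n ∧ v <+: l} = {v} := by
    ext l
    constructor
    · rintro ⟨h1, h2⟩
      exact (List.IsPrefix.eq_of_length h2 (by omega)).symm
    · rintro rfl; exact ⟨hv, List.prefix_refl _⟩
  rw [leafSum, this, finsum_mem_singleton]

lemma leafSum_split (n p : ℕ) (σ : V → ZMod p) (v : V) (hv : v.length < n) :
    leafSum n p σ v = leafSum n p σ (v ++ [true]) + leafSum n p σ (v ++ [false]) := by
  have hfin : ∀ w : V, {l : V | l.length = n ∧ w <+: l}.Finite := fun w =>
    (List.finite_length_eq Bool n).subset (fun l hl => hl.1)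
  have hdisj : Disjoint {l : V | l.length = n ∧ (v ++ [true]) <+: l}
      {l : V | l.length = n ∧ (v ++ [false]) <+: l} := by
    rw [Set.disjoint_left]
    rintro l ⟨_, h1⟩ ⟨_, h2⟩
    have e1 := List.prefix_iff_eq_take.mp h1
    have e2 := List.prefix_iff_eq_take.mp h2
    simp only [List.length_append, List.length_singleton] at e1 e2
    have : v ++ [true] = v ++ [false] := by rw [e1, e2]
    simp at this
  have hset : {l : V | l.length = n ∧ v <+: l} =
      {l : V | l.length = n ∧ (v ++ [true]) <+: l} ∪
      {l : V | l.length = n ∧ (v ++ [false]) <+: l} := by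
    ext l
    constructor
    · rintro ⟨h1, t, rfl⟩
      match t with
      | [] => simp at h1; omega
      | true :: t' => exact Or.inl ⟨h1, t', by simp⟩
      | false :: t' => exact Or.inr ⟨h1, t', by simp⟩
    · rintro (⟨h1, h2⟩ | ⟨h1, h2⟩) <;>
        exact ⟨h1, ((v.prefix_append _).trans h2)⟩
  rw [leafSum, hset, finsum_mem_union hdisj (hfin _) (hfin _)]
  rfl

lemma upclosure_forward (n p : ℕ) (σ : V → ZMod p) (x : V × ZMod p)
    (h : UpClosure (pspR n p) (pspS n p σ) x) : x.2 = leafSum n p σ x.1 := by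
  induction h with
  | base hx => rw [hx.2, leafSum_leaf n p σ _ hx.1]
  | step ha hb hr iha ihb =>
    obtain ⟨hsum, hlen, (⟨e1, e2⟩ | ⟨e1, e2⟩)⟩ := hr <;>
      rw [← hsum, iha, ihb, e1, e2, leafSum_split n p σ _ hlen] <;> ring

lemma upclosure_backward (n p : ℕ) (σ : V → ZMod p) :
    ∀ k (v : V), v.length ≤ n → n - v.length = k →
      UpClosure (pspR n p) (pspS n p σ) (v, leafSum n p σ v) := by
  intro k
  induction k with
  | zero =>
    intro v hv hk
    have : v.length = n := by omega
    exact UpClosure.base ⟨this, (leafSum_leaf n p σ v this)⟩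
  | succ k ih =>
    intro v hv hk
    have hlt : v.length < n := by omega
    have h1 := ih (v ++ [true]) (by simp; omega) (by simp; omega)
    have h2 := ih (v ++ [false]) (by simp; omega) (by simp; omega)
    have := UpClosure.step h1 h2 (c := (v, leafSum n p σ v))
      ⟨(leafSum_split n p σ v hlt).symm, hlt, Or.inl ⟨rfl, rfl⟩⟩
    exact this

/-- in the PSP instance `P(n,p,σ,t)`, for every tree vertex
`v` and every `a ∈ Z/pZ`, the pair `(v,a)` lies in the upward closure of `S`
iff `a` is the sum of `σ(l)` over the leaves `l` below `v`; in particular for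
each vertex `v` there is exactly one such `a`. -/
theorem stmt_9 (n p : ℕ) (hn : 1 ≤ n) (hp : p.Prime) (σ : V → ZMod p) :
    (∀ v : V, v.length ≤ n → ∀ a : ZMod p,
      (UpClosure (pspR n p) (pspS n p σ) (v, a) ↔
        a = ∑ᶠ l ∈ {l : V | l.length = n ∧ v <+: l}, σ l)) ∧
    (∀ v : V, v.length ≤ n →
      ∃! a : ZMod p, UpClosure (pspR n p) (pspS n p σ) (v, a)) := by
  have fwd := upclosure_forward n p σ
  refine ⟨fun v hv a => ⟨fun h => fwd (v, a) h, ?_⟩,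
    fun v hv => ⟨leafSum n p σ v, upclosure_backward n p σ _ v hv rfl,
      fun a ha => fwd (v, a) ha⟩⟩
  rintro rfl
  exact upclosure_backward n p σ _ v hv rfl
end

section
/- Let n ≥ 1, let p be a prime, let T = (V,E) be the complete binary tree of height n with leaf set L and root root, and let σ : L → Z/pZ and t ∈ Z/pZ. Then the PSP instance P(n,p,σ,t) is a positive instance of the path systems problem — i.e. the target (root, t) lies in the upward closure of S — if and only if t = Σ_{l ∈ L} σ(l) (sum in Z/pZ). -/
noncomputable def subSum (n : ℕ) {p : ℕ} (σ : V → ZMod p) (v : V) : ZMod p :=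
  ∑ᶠ l ∈ {l : V | l.length = n ∧ v <+: l}, σ l

lemma leafset_finite (n : ℕ) (v : V) : {l : V | l.length = n ∧ v <+: l}.Finite :=
  (List.finite_length_eq Bool n).subset (fun _ h => h.1)

lemma subSum_leaf {n p : ℕ} (σ : V → ZMod p) (v : V) (hv : v.length = n) :
    subSum n σ v = σ v := by
  have : {l : V | l.length = n ∧ v <+: l} = {v} := by
    ext l
    constructor
    · rintro ⟨h1, h2⟩
      exact (h2.eq_of_length (hv.trans h1.symm)).symm
    · rintro rfl; exact ⟨hv, List.prefix_refl _⟩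
  rw [subSum, this, finsum_mem_singleton]

lemma subSum_split {n p : ℕ} (σ : V → ZMod p) (v : V) (hv : v.length < n) :
    subSum n σ v = subSum n σ (v ++ [true]) + subSum n σ (v ++ [false]) := by
  have hset : {l : V | l.length = n ∧ v <+: l} =
      {l : V | l.length = n ∧ v ++ [true] <+: l} ∪
      {l : V | l.length = n ∧ v ++ [false] <+: l} := by
    ext l
    constructor
    · rintro ⟨h1, r, rfl⟩
      cases r with
      | nil => simp at h1; omega
      | cons b r' =>
        cases b
        · exact Or.inr ⟨h1, r', by simp⟩
        · exact Or.inl ⟨h1, r', by simp⟩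
    · rintro (⟨h1, h2⟩ | ⟨h1, h2⟩)
      · exact ⟨h1, ((v.prefix_append [true]).trans h2)⟩
      · exact ⟨h1, ((v.prefix_append [false]).trans h2)⟩
  have hdisj : Disjoint {l : V | l.length = n ∧ v ++ [true] <+: l}
      {l : V | l.length = n ∧ v ++ [false] <+: l} := by
    rw [Set.disjoint_left]
    rintro l ⟨_, h2⟩ ⟨_, h4⟩
    have h5 := List.prefix_of_prefix_length_le h2 h4 (by simp)
    have h6 := h5.eq_of_length (by simp)
    simpa using congrArg (fun w => w.getLast?) h6
  rw [subSum, hset, finsum_mem_union hdisj (leafset_finite n _) (leafset_finite n _)]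
  rfl

lemma upc_invariant {n p : ℕ} (σ : V → ZMod p) (x : V × ZMod p)
    (h : UpClosure (pspR n p) (pspS n p σ) x) :
    x.1.length ≤ n ∧ x.2 = subSum n σ x.1 := by
  induction h with
  | base hx => exact ⟨hx.1.le, hx.2.trans (subSum_leaf σ _ hx.1).symm⟩
  | step ha hb hr iha ihb =>
    obtain ⟨hsum, hlen, hch⟩ := hr
    refine ⟨hlen.le, ?_⟩
    rw [subSum_split σ _ hlen, ← hsum, iha.2, ihb.2]
    rcases hch with ⟨h1, h2⟩ | ⟨h1, h2⟩ <;> rw [h1, h2]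
    ring

lemma upc_derive {n p : ℕ} (σ : V → ZMod p) :
    ∀ k (v : V), v.length ≤ n → n - v.length ≤ k →
      UpClosure (pspR n p) (pspS n p σ) (v, subSum n σ v) := by
  intro k
  induction k with
  | zero =>
    intro v hv hk
    have hv' : v.length = n := by omega
    rw [subSum_leaf σ v hv']
    exact UpClosure.base ⟨hv', rfl⟩
  | succ k ih =>
    intro v hv hk
    rcases eq_or_lt_of_le hv with hv' | hv'
    · rw [subSum_leaf σ v hv']
      exact UpClosure.base ⟨hv', rfl⟩
    · have h1 := ih (v ++ [true]) (by simpa using hv') (by simp; omega)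
      have h2 := ih (v ++ [false]) (by simpa using hv') (by simp; omega)
      have := UpClosure.step h1 h2
        (c := (v, subSum n σ (v ++ [true]) + subSum n σ (v ++ [false])))
        ⟨rfl, hv', Or.inl ⟨rfl, rfl⟩⟩
      rwa [← subSum_split σ v hv'] at this

/-- the PSP instance `P(n,p,σ,t)` is a positive instance of
the path systems problem, i.e. the target `(root, t)` lies in the upward
closure of `S`, iff `t = Σ_{l ∈ L} σ(l)`. -/
theorem stmt_10 (n p : ℕ) (hn : 1 ≤ n) (hp : p.Prime) (σ : V → ZMod p)
    (t : ZMod p) :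
    UpClosure (pspR n p) (pspS n p σ) (([] : List Bool), t) ↔
      t = ∑ᶠ l ∈ {l : V | l.length = n}, σ l := by
  constructor
  · intro h
    have := upc_invariant σ _ h
    have h2 : {l : V | l.length = n ∧ ([] : V) <+: l} = {l : V | l.length = n} := by
      ext l; simp
    simpa [subSum, h2] using this.2
  · rintro rfl
    have h2 : {l : V | l.length = n ∧ ([] : V) <+: l} = {l : V | l.length = n} := by
      ext l; simp
    have := upc_derive σ n ([] : V) (Nat.zero_le n) (by omega)
    simpa [subSum, h2] using this
end
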